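/- If $X \subseteq \binom{[n]}{k}$ is an order ideal or an interval in the Gale order, then the Hasse diagram of $X$ is a subgraph of the dual graph of $X$; that is, every covering relation $x \lessdot y$ in $X$ satisfies $|x \cap y| = k - 1$. -/

import Mathlib

/-- Increasing enumeration of a finite set of naturals. -/
def sortedL (x : Finset ℕ) : List ℕ := x.sort (· ≤ ·)

/-- The Gale (Bruhat) order on finite subsets of ℕ: componentwise comparison of
the increasing enumerations. -/
def GaleLE (x y : Finset ℕ) : Prop :=
  ∀ i (hx : i < (sortedL x).length) (hy : i < (sortedL y).length),
    (sortedL x).get ⟨i, hx⟩ ≤ (sortedL y).get ⟨i, hy⟩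

def GaleLT (x y : Finset ℕ) : Prop := GaleLE x y ∧ x ≠ y

lemma sortedL_length (x : Finset ℕ) : (sortedL x).length = x.card :=
  Finset.length_sort _

lemma sortedL_toFinset (x : Finset ℕ) : (sortedL x).toFinset = x :=
  Finset.sort_toFinset _ _

lemma sortedL_injective : Function.Injective sortedL := fun x y h => by
  rw [← sortedL_toFinset x, ← sortedL_toFinset y, h]

lemma sortedL_sorted_lt (x : Finset ℕ) : (sortedL x).Pairwise (· < ·) :=
  (Finset.sortedLT_sort x).pairwise

lemma mem_sortedL {a : ℕ} {x : Finset ℕ} : a ∈ sortedL x ↔ a ∈ x :=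
  Finset.mem_sort _

lemma get_eq_of_eq {l l' : List ℕ} (h : l = l') {j : ℕ}
    (h1 : j < l.length) (h2 : j < l'.length) :
    l.get ⟨j, h1⟩ = l'.get ⟨j, h2⟩ := by subst h; rfl

lemma galeLE_trans {u v w : Finset ℕ} (h : (sortedL u).length = (sortedL v).length)
    (huv : GaleLE u v) (hvw : GaleLE v w) : GaleLE u w := by
  intro i hu hw
  exact le_trans (huv i hu (h ▸ hu)) (hvw i (h ▸ hu) hw)

/-- If `X` is an order ideal or an interval in the Gale order on `k`-subsets of
`[n]`, then every covering relation `x ⋖ y` in `X` satisfies `|x ∩ y| = k - 1`,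
i.e. the Hasse diagram of `X` is a subgraph of the dual graph of `X`. -/
theorem hasse_subgraph_dual
    (n k : ℕ) (X : Set (Finset ℕ))
    (hX : ∀ x ∈ X, x ⊆ Finset.Icc 1 n ∧ x.card = k)
    (hXi : (∀ y ∈ X, ∀ x : Finset ℕ, x ⊆ Finset.Icc 1 n → x.card = k →
              GaleLE x y → x ∈ X) ∨
           (∃ a b : Finset ℕ, a ⊆ Finset.Icc 1 n ∧ a.card = k ∧
              b ⊆ Finset.Icc 1 n ∧ b.card = k ∧
              ∀ z, z ∈ X ↔ (z ⊆ Finset.Icc 1 n ∧ z.card = k ∧ GaleLE a z ∧ GaleLE z b)))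
    (x y : Finset ℕ) (hx : x ∈ X) (hy : y ∈ X)
    (hcov : GaleLT x y ∧ ∀ z ∈ X, ¬(GaleLT x z ∧ GaleLT z y)) :
    (x ∩ y).card = k - 1 := by
  classical
  obtain ⟨⟨hxy, hne⟩, hcov2⟩ := hcov
  obtain ⟨hxs, hxk⟩ := hX x hx
  obtain ⟨hys, hyk⟩ := hX y hy
  set lx := sortedL x with hlxdef
  set ly := sortedL y with hlydef
  have hlx : lx.length = k := by rw [hlxdef, sortedL_length, hxk]
  have hly : ly.length = k := by rw [hlydef, sortedL_length, hyk]
  -- there is an index where the sorted lists differ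
  have hex : ∃ j, ∃ (h1 : j < lx.length) (h2 : j < ly.length),
      lx.get ⟨j, h1⟩ < ly.get ⟨j, h2⟩ := by
    by_contra hcon
    push_neg at hcon
    apply hne
    apply sortedL_injective
    apply List.ext_get (by rw [← hlxdef, ← hlydef, hlx, hly])
    intro j h1 h2
    exact le_antisymm (hxy j h1 h2) (hcon j h1 h2)
  -- minimal such index
  let i := Nat.find hex
  obtain ⟨hi1, hi2, hilt⟩ : ∃ (h1 : i < lx.length) (h2 : i < ly.length),
      lx.get ⟨i, h1⟩ < ly.get ⟨i, h2⟩ := Nat.find_spec hex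
  have hmin : ∀ j (h1 : j < lx.length) (h2 : j < ly.length), j < i →
      lx.get ⟨j, h1⟩ = ly.get ⟨j, h2⟩ := by
    intro j h1 h2 hj
    have := Nat.find_min hex hj
    push_neg at this
    exact le_antisymm (hxy j h1 h2) (this h1 h2)
  set a := lx.get ⟨i, hi1⟩ with ha
  set lz := ly.set i a with hlz
  have hlenz : lz.length = ly.length := by rw [hlz, List.length_set]
  have hlzlen : lz.length = k := by rw [hlz, List.length_set, hly]
  have hget : ∀ j (h : j < lz.length), lz.get ⟨j, h⟩ =
      if i = j then a else ly.get ⟨j, by rwa [hlz, List.length_set] at h⟩ := by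
    intro j h
    simp only [hlz, List.get_eq_getElem, List.getElem_set]
  -- lz is strictly sorted
  have hsortz : lz.Pairwise (· < ·) := by
    rw [List.pairwise_iff_get]
    intro p q hpq
    have hp : (p : ℕ) < lz.length := p.isLt
    have hq : (q : ℕ) < lz.length := q.isLt
    have hp' : (p : ℕ) < ly.length := by omega
    have hq' : (q : ℕ) < ly.length := by omega
    have hgp := hget p hp
    have hgq := hget q hq
    have hpq' : (p : ℕ) < (q : ℕ) := hpq
    rcases eq_or_ne i (p : ℕ) with hip | hip
    · -- i = p < q : a = lx[i] < ly[i] ≤ ly[q]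
      have hiq : i ≠ (q : ℕ) := by omega
      rw [show lz.get p = lz.get ⟨(p:ℕ), hp⟩ from rfl, hgp, if_pos hip,
        show lz.get q = lz.get ⟨(q:ℕ), hq⟩ from rfl, hgq, if_neg hiq]
      calc a < ly.get ⟨i, hi2⟩ := hilt
        _ ≤ ly.get ⟨(q:ℕ), hq'⟩ := by
            rcases eq_or_lt_of_le (show i ≤ (q:ℕ) by omega) with h | h
            · exact le_of_eq (by congr 1; exact Fin.ext h)
            · exact le_of_lt ((sortedL_sorted_lt y).rel_get_of_lt (by simpa using h))
    · rcases eq_or_ne i (q : ℕ) with hiq | hiq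
      · -- p < q = i : lz[p] = ly[p] = lx[p] < lx[i] = a
        have hpi : (p : ℕ) < i := by omega
        have hp'' : (p : ℕ) < lx.length := by omega
        rw [show lz.get p = lz.get ⟨(p:ℕ), hp⟩ from rfl, hgp, if_neg hip,
          show lz.get q = lz.get ⟨(q:ℕ), hq⟩ from rfl, hgq, if_pos hiq]
        rw [← hmin (p:ℕ) hp'' hp' hpi]
        exact (sortedL_sorted_lt x).rel_get_of_lt (by simpa using hpi)
      · rw [show lz.get p = lz.get ⟨(p:ℕ), hp⟩ from rfl, hgp, if_neg hip,
          show lz.get q = lz.get ⟨(q:ℕ), hq⟩ from rfl, hgq, if_neg hiq]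
        exact (sortedL_sorted_lt y).rel_get_of_lt (by simpa using hpq')
  have hnodz : lz.Nodup := hsortz.nodup
  set z := lz.toFinset with hz
  have hsortedz : sortedL z = lz := by
    rw [hz]
    exact (List.toFinset_sort _ hnodz).2 (hsortz.imp le_of_lt)
  have hzk : z.card = k := by rw [← sortedL_length, hsortedz, hlzlen]
  have hzsub : z ⊆ Finset.Icc 1 n := by
    intro c hc
    rw [hz, List.mem_toFinset] at hc
    rcases List.mem_or_eq_of_mem_set hc with h | h
    · exact hys (mem_sortedL.mp h)
    · subst h
      exact hxs (mem_sortedL.mp (List.get_mem lx ⟨i, hi1⟩))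
  -- GaleLE x z
  have hxz : GaleLE x z := by
    intro j h1 h2
    have h2' : j < lz.length := by rw [← hsortedz]; exact h2
    rw [get_eq_of_eq hsortedz h2 h2', hget j h2']
    split
    · next h => exact le_of_eq (by rw [ha]; congr 1; exact Fin.ext h.symm)
    · exact hxy j h1 (by show j < ly.length; omega)
  -- GaleLE z y
  have hzy : GaleLE z y := by
    intro j h1 h2
    have h1' : j < lz.length := by rw [← hsortedz]; exact h1
    rw [get_eq_of_eq hsortedz h1 h1', hget j h1']
    split
    · next h =>
      subst h
      exact le_of_lt hilt
    · exact le_rfl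
  -- z ≠ y
  have hzney : z ≠ y := by
    intro h
    have heq : lz = ly := by rw [← hsortedz, h]
    have h3 : lz.get ⟨i, by omega⟩ = ly.get ⟨i, hi2⟩ := get_eq_of_eq heq _ _
    rw [hget i (by omega), if_pos rfl] at h3
    exact absurd h3 (ne_of_lt hilt)
  -- z ∈ X
  have hzX : z ∈ X := by
    rcases hXi with hideal | ⟨A, B, _, hAk, _, _, hiff⟩
    · exact hideal y hy z hzsub hzk hzy
    · obtain ⟨_, _, hAx, _⟩ := (hiff x).mp hx
      obtain ⟨_, _, _, hyB⟩ := (hiff y).mp hy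
      refine (hiff z).mpr ⟨hzsub, hzk, ?_, ?_⟩
      · refine galeLE_trans ?_ hAx hxz
        rw [sortedL_length, sortedL_length, hAk, hxk]
      · refine galeLE_trans ?_ hzy hyB
        rw [sortedL_length, sortedL_length, hzk, hyk]
  -- by the covering property, z = x
  have hzx : z = x := by
    by_contra h
    exact hcov2 z hzX ⟨⟨hxz, fun e => h e.symm⟩, ⟨hzy, hzney⟩⟩
  -- hence lx = lz, so lx and ly agree off i
  have hlxlz : lx = lz := by rw [← hsortedz, hzx]
  have hagree : ∀ j (h1 : j < lx.length) (h2 : j < ly.length), j ≠ i →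
      lx.get ⟨j, h1⟩ = ly.get ⟨j, h2⟩ := by
    intro j h1 h2 hj
    have h1' : j < lz.length := by omega
    rw [get_eq_of_eq hlxlz h1 h1', hget j h1', if_neg (Ne.symm hj)]
  -- a ∉ y
  have hanoty : a ∉ y := by
    intro hay
    obtain ⟨⟨j, hj⟩, hjeq⟩ := List.mem_iff_get.mp (mem_sortedL.mpr hay : a ∈ ly)
    rw [← hlydef] at hj
    rcases eq_or_ne j i with hji | hji
    · subst hji
      exact absurd hjeq.symm (ne_of_lt hilt)
    · have hj' : j < lx.length := by omega
      rw [← hagree j hj' hj hji] at hjeq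
      have hinj := (List.nodup_iff_injective_get.mp (sortedL_sorted_lt x).nodup)
        (show lx.get ⟨j, hj'⟩ = lx.get ⟨i, hi1⟩ from hjeq)
      exact hji (congrArg Fin.val hinj)
  -- x ∩ y = x.erase a
  have hax : a ∈ x := mem_sortedL.mp (List.get_mem lx ⟨i, hi1⟩)
  have hinter : x ∩ y = x.erase a := by
    ext c
    simp only [Finset.mem_inter, Finset.mem_erase]
    constructor
    · rintro ⟨hcx, hcy⟩
      refine ⟨fun h => hanoty (h ▸ hcy), hcx⟩
    · rintro ⟨hca, hcx⟩
      obtain ⟨⟨j, hj⟩, hjeq⟩ := List.mem_iff_get.mp (mem_sortedL.mpr hcx : c ∈ lx)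
      rw [← hlxdef] at hj
      have hji : j ≠ i := by
        intro h
        subst h
        exact hca (by rw [← hjeq, ha])
      have hj2 : j < ly.length := by omega
      refine ⟨hcx, mem_sortedL.mp ?_⟩
      rw [← hjeq, hagree j hj hj2 hji]
      exact mem_sortedL.mpr (mem_sortedL.mp (List.get_mem ly ⟨j, hj2⟩))
  rw [hinter, Finset.card_erase_of_mem hax, hxk]
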